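/- Let D₁, D₂ be two disjoint closed discs in ℂ and let L be the straight line segment joining a boundary point of D₁ to a boundary point of D₂ that realizes the minimal distance between the discs. Then the set N = D₁ ∪ L ∪ D₂ is compact, connected, and its complement ℂ \ N is connected. -/

import Mathlib

open Set Metric Complex

private lemma seg_joined {s : Set ℂ} {x y : ℂ} (h : segment ℝ x y ⊆ s) : JoinedIn s x y := by
  have hpc := (convex_segment x y).isPathConnected ⟨x, left_mem_segment ℝ x y⟩
  exact (hpc.joinedIn x (left_mem_segment ℝ x y) y (right_mem_segment ℝ x y)).mono h

private lemma std_compl (r₁ r₂ d : ℝ) (hr₁ : 0 < r₁) (hr₂ : 0 < r₂) (hd : r₁ + r₂ < d) :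
    IsConnected ((Metric.closedBall (0:ℂ) r₁ ∪ segment ℝ (r₁:ℂ) ((d:ℂ) - r₂)
      ∪ Metric.closedBall (d:ℂ) r₂)ᶜ) := by
  have hd0 : 0 < d := by linarith
  set N : Set ℂ := Metric.closedBall (0:ℂ) r₁ ∪ segment ℝ (r₁:ℂ) ((d:ℂ) - r₂)
      ∪ Metric.closedBall (d:ℂ) r₂ with hN
  -- points of the segment are real with positive real part
  have hseg : ∀ w ∈ segment ℝ (r₁:ℂ) ((d:ℂ) - r₂), w.im = 0 ∧ 0 < w.re := by
    rintro w ⟨p, q, hp, hq, hpq, rfl⟩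
    constructor
    · simp [Complex.add_im, Complex.smul_im]
    · have h1 : ((d:ℂ) - r₂).re = d - r₂ := by simp
      have : (p • (r₁:ℂ) + q • ((d:ℂ) - r₂)).re = p * r₁ + q * (d - r₂) := by
        simp [Complex.add_re, Complex.smul_re]
      rw [this]
      nlinarith
  -- moving vertically away from the real axis stays outside N
  have key : ∀ z : ℂ, z ∉ N → ∀ t : ℝ,
      ((0 ≤ z.im ∧ 0 ≤ t) ∨ (z.im ≤ 0 ∧ t ≤ 0)) → z + (t:ℂ) * Complex.I ∉ N := by
    intro z hz t hsgn hmem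
    have him : (z + (t:ℂ) * Complex.I).im = z.im + t := by simp
    have hre : (z + (t:ℂ) * Complex.I).re = z.re := by simp
    have habs : ∀ c : ℝ, ‖z - c‖ ≤ ‖z + (t:ℂ) * Complex.I - c‖ := by
      intro c
      rw [Complex.norm_def, Complex.norm_def]
      apply Real.sqrt_le_sqrt
      simp only [Complex.normSq_apply, Complex.sub_re, Complex.sub_im, Complex.add_re,
        Complex.add_im, Complex.mul_re, Complex.mul_im, Complex.I_re, Complex.I_im,
        Complex.ofReal_re, Complex.ofReal_im]
      rcases hsgn with ⟨h1, h2⟩ | ⟨h1, h2⟩ <;> nlinarith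
    apply hz
    rcases hmem with (h | h) | h
    · left; left
      rw [mem_closedBall, Complex.dist_eq] at h ⊢
      calc ‖z - 0‖ ≤ ‖z + (t:ℂ) * Complex.I - 0‖ := by
              simpa using habs 0
        _ ≤ r₁ := by simpa using h
    · have h0 := (hseg _ h).1
      rw [him] at h0
      have ht0 : t = 0 := by rcases hsgn with ⟨h1, h2⟩ | ⟨h1, h2⟩ <;> linarith
      left; right
      simpa [ht0] using h
    · right
      rw [mem_closedBall, Complex.dist_eq] at h ⊢
      calc ‖z - d‖ ≤ ‖z + (t:ℂ) * Complex.I - d‖ := habs d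
        _ ≤ r₂ := h
  -- points with large |imaginary part| are outside N
  have high : ∀ w : ℂ, max r₁ r₂ < |w.im| → w ∉ N := by
    intro w hw hmem
    rcases hmem with (h | h) | h
    · rw [mem_closedBall, Complex.dist_eq, sub_zero] at h
      have := Complex.abs_im_le_norm w
      have : |w.im| ≤ r₁ := le_trans this h
      have := le_max_left r₁ r₂
      linarith
    · rw [(hseg _ h).1] at hw
      simp at hw
      linarith [hw.1]
    · rw [mem_closedBall, Complex.dist_eq] at h
      have h2 : |(w - d).im| ≤ ‖w - d‖ := Complex.abs_im_le_norm _
      have h3 : (w - (d:ℂ)).im = w.im := by simp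
      rw [h3] at h2
      have := le_max_right r₁ r₂
      linarith
  -- the two half-plane pieces
  set U : Set ℂ := {z : ℂ | 0 ≤ z.im ∧ z ∉ N} with hU
  set V : Set ℂ := {z : ℂ | z.im ≤ 0 ∧ z ∉ N} with hV
  -- the common base point
  set p : ℂ := ((-(r₁+1) : ℝ) : ℂ) with hp
  have hpim : p.im = 0 := by simp [hp]
  have hpre : p.re = -(r₁+1) := by simp [hp]
  have hpN : p ∉ N := by
    intro hmem
    rcases hmem with (h | h) | h
    · rw [mem_closedBall, Complex.dist_eq, sub_zero, hp, Complex.norm_real, Real.norm_eq_abs] at h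
      rw [abs_of_nonpos (by linarith)] at h
      linarith
    · have := (hseg _ h).2
      rw [hpre] at this
      linarith
    · rw [mem_closedBall, Complex.dist_eq, hp] at h
      have : ((-(r₁+1):ℝ):ℂ) - (d:ℂ) = ((-(r₁+1) - d : ℝ) : ℂ) := by push_cast; ring
      rw [this, Complex.norm_real, Real.norm_eq_abs, abs_of_nonpos (by linarith)] at h
      linarith
  -- vertical segments stay in U (resp. V)
  have vertU : ∀ z : ℂ, z ∈ U → ∀ T : ℝ, 0 ≤ T →
      segment ℝ z (z + (T:ℂ) * Complex.I) ⊆ U := by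
    intro z hz T hT w hw
    rw [segment_eq_image'] at hw
    obtain ⟨θ, hθ, rfl⟩ := hw
    have hrw : z + θ • (z + (T:ℂ) * Complex.I - z) = z + ((θ * T : ℝ) : ℂ) * Complex.I := by
      rw [Complex.real_smul]; push_cast; ring
    show z + θ • (z + (T:ℂ) * Complex.I - z) ∈ _
    rw [hrw]
    have hθT : 0 ≤ θ * T := mul_nonneg hθ.1 hT
    refine ⟨?_, key z hz.2 (θ * T) (Or.inl ⟨hz.1, hθT⟩)⟩
    have : (z + ((θ * T : ℝ) : ℂ) * Complex.I).im = z.im + θ * T := by simp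
    rw [this]; linarith [hz.1]
  have vertV : ∀ z : ℂ, z ∈ V → ∀ T : ℝ, T ≤ 0 →
      segment ℝ z (z + (T:ℂ) * Complex.I) ⊆ V := by
    intro z hz T hT w hw
    rw [segment_eq_image'] at hw
    obtain ⟨θ, hθ, rfl⟩ := hw
    have hrw : z + θ • (z + (T:ℂ) * Complex.I - z) = z + ((θ * T : ℝ) : ℂ) * Complex.I := by
      rw [Complex.real_smul]; push_cast; ring
    show z + θ • (z + (T:ℂ) * Complex.I - z) ∈ _
    rw [hrw]
    have hθT : θ * T ≤ 0 := mul_nonpos_of_nonneg_of_nonpos hθ.1 hT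
    refine ⟨?_, key z hz.2 (θ * T) (Or.inr ⟨hz.1, hθT⟩)⟩
    have : (z + ((θ * T : ℝ) : ℂ) * Complex.I).im = z.im + θ * T := by simp
    rw [this]; linarith [hz.1]
  -- horizontal segments at large height stay in U (resp. V)
  have horizU : ∀ a b : ℂ, max r₁ r₂ < a.im → a.im = b.im → segment ℝ a b ⊆ U := by
    rintro a b ha hab w ⟨s, q, hs, hq, hsq, rfl⟩
    have him : (s • a + q • b).im = s * a.im + q * b.im := by
      simp [Complex.add_im, Complex.smul_im]
    have heq : (s • a + q • b).im = a.im := by rw [him, ← hab]; linear_combination a.im * hsq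
    have hr : (0:ℝ) < max r₁ r₂ := (lt_max_iff.mpr (Or.inl hr₁) : (0:ℝ) < max r₁ r₂)
    refine ⟨by rw [heq]; linarith, high _ ?_⟩
    rw [heq, abs_of_pos (by linarith)]
    exact ha
  have horizV : ∀ a b : ℂ, a.im < -(max r₁ r₂) → a.im = b.im → segment ℝ a b ⊆ V := by
    rintro a b ha hab w ⟨s, q, hs, hq, hsq, rfl⟩
    have him : (s • a + q • b).im = s * a.im + q * b.im := by
      simp [Complex.add_im, Complex.smul_im]
    have heq : (s • a + q • b).im = a.im := by rw [him, ← hab]; linear_combination a.im * hsq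
    have hr : (0:ℝ) < max r₁ r₂ := (lt_max_iff.mpr (Or.inl hr₁) : (0:ℝ) < max r₁ r₂)
    refine ⟨by rw [heq]; linarith, high _ ?_⟩
    rw [heq, abs_of_neg (by linarith)]
    linarith
  -- U is path connected
  have hUpc : IsPathConnected U := by
    refine ⟨p, ⟨by rw [hpim], hpN⟩, ?_⟩
    intro z hz
    set H : ℝ := z.im + max r₁ r₂ + 1 with hH
    have hHpos : 0 ≤ H := by have := hz.1; have : (0:ℝ) < max r₁ r₂ := (lt_max_iff.mpr (Or.inl hr₁) : (0:ℝ) < max r₁ r₂); simp [hH]; linarith [hz.1]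
    have hHbig : max r₁ r₂ < H := by
      have h1 : 0 ≤ z.im := hz.1
      rw [hH]; linarith
    set p' : ℂ := p + (H:ℂ) * Complex.I with hp'
    set z' : ℂ := z + ((H - z.im : ℝ):ℂ) * Complex.I with hz'
    have hp'im : p'.im = H := by simp [hp', hpim]
    have hz'im : z'.im = H := by simp [hz']
    have j1 : JoinedIn U p p' := seg_joined (vertU p ⟨by rw [hpim], hpN⟩ H hHpos)
    have j3 : JoinedIn U z z' := seg_joined (vertU z hz (H - z.im)
      (by rw [hH]; have h0 : (0:ℝ) < max r₁ r₂ := lt_max_iff.mpr (Or.inl hr₁); linarith))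
    have j2 : JoinedIn U p' z' := seg_joined (horizU p' z' (by rw [hp'im]; exact hHbig)
      (by rw [hp'im, hz'im]))
    exact (j1.trans j2).trans j3.symm
  -- V is path connected
  have hVpc : IsPathConnected V := by
    refine ⟨p, ⟨by rw [hpim], hpN⟩, ?_⟩
    intro z hz
    set H : ℝ := z.im - max r₁ r₂ - 1 with hH
    have hHneg : H ≤ 0 := by have := hz.1; have : (0:ℝ) < max r₁ r₂ := (lt_max_iff.mpr (Or.inl hr₁) : (0:ℝ) < max r₁ r₂); simp [hH]; linarith [hz.1]
    have hHbig : H < -(max r₁ r₂) := by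
      have h1 : z.im ≤ 0 := hz.1
      have h0 : (0:ℝ) < max r₁ r₂ := lt_max_iff.mpr (Or.inl hr₁)
      rw [hH]; linarith
    set p' : ℂ := p + (H:ℂ) * Complex.I with hp'
    set z' : ℂ := z + ((H - z.im : ℝ):ℂ) * Complex.I with hz'
    have hp'im : p'.im = H := by simp [hp', hpim]
    have hz'im : z'.im = H := by simp [hz']
    have j1 : JoinedIn V p p' := seg_joined (vertV p ⟨by rw [hpim], hpN⟩ H hHneg)
    have j3 : JoinedIn V z z' := seg_joined (vertV z hz (H - z.im)
      (by rw [hH]; have h0 : (0:ℝ) < max r₁ r₂ := lt_max_iff.mpr (Or.inl hr₁); linarith))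
    have j2 : JoinedIn V p' z' := seg_joined (horizV p' z' (by rw [hp'im]; exact hHbig)
      (by rw [hp'im, hz'im]))
    exact (j1.trans j2).trans j3.symm
  -- conclude
  have hsplit : Nᶜ = U ∪ V := by
    ext z
    simp only [mem_compl_iff, hU, hV, mem_union, mem_setOf_eq]
    constructor
    · intro h
      rcases le_total 0 z.im with h' | h'
      · exact Or.inl ⟨h', h⟩
      · exact Or.inr ⟨h', h⟩
    · rintro (⟨_, h⟩ | ⟨_, h⟩) <;> exact h
  rw [hsplit]
  exact hUpc.isConnected.union ⟨p, ⟨by rw [hpim], hpN⟩, ⟨by rw [hpim], hpN⟩⟩ hVpc.isConnected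

theorem stmt_13 (c₁ c₂ : ℂ) (r₁ r₂ : ℝ) (hr₁ : 0 < r₁) (hr₂ : 0 < r₂)
    (hsep : r₁ + r₂ < dist c₁ c₂) :
    let u : ℂ := ‖c₂ - c₁‖⁻¹ • (c₂ - c₁)
    let L : Set ℂ := segment ℝ (c₁ + r₁ • u) (c₂ - r₂ • u)
    let N : Set ℂ := Metric.closedBall c₁ r₁ ∪ L ∪ Metric.closedBall c₂ r₂
    IsCompact N ∧ IsConnected N ∧ IsConnected Nᶜ := by
  intro u L N
  set d : ℝ := ‖c₂ - c₁‖ with hdd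
  have hdist : dist c₁ c₂ = d := by rw [dist_eq_norm, norm_sub_rev]
  have hd0 : 0 < d := by rw [← hdist]; linarith
  have hne : c₂ - c₁ ≠ 0 := by
    intro h; rw [hdd, h, norm_zero] at hd0; exact lt_irrefl 0 hd0
  have hu : ‖u‖ = 1 := by
    show ‖‖c₂ - c₁‖⁻¹ • (c₂ - c₁)‖ = 1
    rw [norm_smul, norm_inv, norm_norm, ← hdd]
    field_simp
  have hur₁ : ‖r₁ • u‖ = r₁ := by rw [norm_smul, hu, Real.norm_eq_abs, abs_of_pos hr₁, mul_one]
  have hur₂ : ‖r₂ • u‖ = r₂ := by rw [norm_smul, hu, Real.norm_eq_abs, abs_of_pos hr₂, mul_one]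
  have hE1 : c₁ + r₁ • u ∈ Metric.closedBall c₁ r₁ := by
    rw [mem_closedBall, dist_eq_norm, add_sub_cancel_left, hur₁]
  have hE2 : c₂ - r₂ • u ∈ Metric.closedBall c₂ r₂ := by
    rw [mem_closedBall, dist_eq_norm, sub_sub_cancel_left, norm_neg, hur₂]
  -- compactness
  have hcompL : IsCompact L := by
    rw [show L = segment ℝ (c₁ + r₁ • u) (c₂ - r₂ • u) from rfl, segment_eq_image']
    exact isCompact_Icc.image (by fun_prop)
  have hcomp : IsCompact N :=
    ((isCompact_closedBall c₁ r₁).union hcompL).union (isCompact_closedBall c₂ r₂)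
  -- connectedness of N
  have hconn : IsConnected N := by
    have h1 : IsConnected (Metric.closedBall c₁ r₁) :=
      (convex_closedBall c₁ r₁).isConnected ⟨c₁, mem_closedBall_self hr₁.le⟩
    have h2 : IsConnected L :=
      (convex_segment _ _).isConnected ⟨_, left_mem_segment ℝ _ _⟩
    have h3 : IsConnected (Metric.closedBall c₂ r₂) :=
      (convex_closedBall c₂ r₂).isConnected ⟨c₂, mem_closedBall_self hr₂.le⟩
    have h12 : IsConnected (Metric.closedBall c₁ r₁ ∪ L) :=
      h1.union ⟨c₁ + r₁ • u, hE1, left_mem_segment ℝ _ _⟩ h2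
    exact h12.union ⟨c₂ - r₂ • u, Or.inr (right_mem_segment ℝ _ _), hE2⟩ h3
  refine ⟨hcomp, hconn, ?_⟩
  -- the normalizing map
  set v : ℂ := (starRingEnd ℂ) u with hv
  have huv : u * v = 1 := by
    rw [hv, Complex.mul_conj]
    norm_cast
    rw [Complex.normSq_eq_norm_sq, hu]; norm_num
  set e : ℂ → ℂ := fun z => (z - c₁) * v with he
  have hnv : ‖v‖ = 1 := by rw [hv, RCLike.norm_conj, hu]
  have hiso : Isometry e := Isometry.of_dist_eq (fun z w => by
    simp only [he, dist_eq_norm]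
    have h' : (z - c₁) * v - (w - c₁) * v = (z - w) * v := by ring
    rw [h', norm_mul, hnv, mul_one])
  have hbij : Function.Bijective e := by
    have hv0 : v ≠ 0 := by
      intro h
      rw [h, mul_zero] at huv
      exact zero_ne_one huv
    constructor
    · intro a b hab
      simp only [he] at hab
      have := mul_right_cancel₀ hv0 hab
      exact sub_left_injective this
    · intro w
      exact ⟨w * v⁻¹ + c₁, by simp only [he, add_sub_cancel_right]; rw [mul_assoc, inv_mul_cancel₀ hv0, mul_one]⟩
  -- affine property
  have haff : ∀ (s q : ℝ), s + q = 1 → ∀ a b : ℂ, e (s • a + q • b) = s • e a + q • e b := by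
    intro s q hsq a b
    have hsq' : (s:ℂ) + (q:ℂ) = 1 := by exact_mod_cast hsq
    simp only [he, Complex.real_smul]
    linear_combination (c₁ * v) * hsq'
  have himseg : ∀ a b : ℂ, e '' segment ℝ a b = segment ℝ (e a) (e b) := by
    intro a b
    apply Subset.antisymm
    · rintro _ ⟨w, ⟨s, q, hs, hq, hsq, rfl⟩, rfl⟩
      exact ⟨s, q, hs, hq, hsq, (haff s q hsq a b).symm⟩
    · rintro _ ⟨s, q, hs, hq, hsq, rfl⟩
      exact ⟨s • a + q • b, ⟨s, q, hs, hq, hsq, rfl⟩, haff s q hsq a b⟩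
  -- key values of e
  have hsu : c₂ - c₁ = d • u := by
    show c₂ - c₁ = d • (‖c₂ - c₁‖⁻¹ • (c₂ - c₁))
    rw [smul_smul, hdd, mul_inv_cancel₀ (ne_of_gt hd0), one_smul]
  have hec₁ : e c₁ = 0 := by simp [he]
  have heE1 : e (c₁ + r₁ • u) = (r₁ : ℂ) := by
    simp only [he, add_sub_cancel_left, Complex.real_smul, smul_eq_mul]
    rw [mul_assoc, huv, mul_one]
  have heE2 : e (c₂ - r₂ • u) = (d : ℂ) - (r₂ : ℂ) := by
    simp only [he]
    have : c₂ - r₂ • u - c₁ = d • u - r₂ • u := by rw [← hsu]; ring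
    rw [this, sub_mul, Complex.real_smul, Complex.real_smul, mul_assoc, mul_assoc, huv,
      mul_one, mul_one]
  have heball : ∀ (c : ℂ) (r : ℝ), e '' Metric.closedBall c r = Metric.closedBall (e c) r := by
    intro c r
    apply Subset.antisymm
    · rintro _ ⟨w, hw, rfl⟩
      rw [mem_closedBall] at hw ⊢
      rw [hiso.dist_eq]
      exact hw
    · intro w hw
      obtain ⟨z, rfl⟩ := hbij.2 w
      rw [mem_closedBall, hiso.dist_eq] at hw
      exact ⟨z, hw, rfl⟩
  have hec₂ : e c₂ = (d : ℂ) := by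
    simp only [he, hsu, Complex.real_smul, mul_assoc, huv, mul_one]
  -- image of N
  have himN : e '' N = Metric.closedBall (0:ℂ) r₁ ∪ segment ℝ (r₁:ℂ) ((d:ℂ) - r₂)
      ∪ Metric.closedBall ((d:ℂ)) r₂ := by
    show e '' (Metric.closedBall c₁ r₁ ∪ L ∪ Metric.closedBall c₂ r₂) = _
    rw [image_union, image_union, heball, heball, hec₁, hec₂,
      show L = segment ℝ (c₁ + r₁ • u) (c₂ - r₂ • u) from rfl, himseg, heE1, heE2]
  -- conclude via the standard configuration
  have hstd : IsConnected ((e '' N)ᶜ) := by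
    rw [himN]
    exact std_compl r₁ r₂ d hr₁ hr₂ (by rw [← hdist]; exact hsep)
  rw [← Set.image_compl_eq hbij] at hstd
  let eIso : ℂ ≃ᵢ ℂ := ⟨Equiv.ofBijective e hbij, hiso⟩
  have hstd' : IsConnected (eIso.toHomeomorph '' Nᶜ) := by
    rw [show ⇑eIso.toHomeomorph = e by ext z; rfl]; exact hstd
  exact eIso.toHomeomorph.isConnected_image.mp hstd'
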